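/- Let ℓ ≥ 1 and consider the finite automaton M with states Q = {1, 2, …, ℓ}, starting state 1, and transitions Δ(i, 1) := min(i+1, ℓ) and Δ(i, 0) := 1. Let B := {ℓ}, and let μ be the product measure on {0,1}^ω under which the coordinates are independent and uniform on {0,1}. Then for μ-almost every b ∈ {0,1}^ω, the characteristic sequence of V_B(b) is 2^{−ℓ+1}-weakly sparse. -/

import Mathlib

open MeasureTheory

/-- `cars x t` is `N_t(x) = x_1 + ⋯ + x_t` (sequences are 0-indexed: `x i` is `x_{i+1}`). -/
def cars (x : ℕ → Bool) (t : ℕ) : ℕ :=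
  ((Finset.range t).filter (fun i => x i = true)).card

/-- `x` is `ε`-weakly sparse if `lim_{s→∞} inf_{t ≥ s} N_t(x)/t ≤ ε`. -/
def epsWeaklySparse (ε : ℝ) (x : ℕ → Bool) : Prop :=
  Filter.liminf (fun t : ℕ => (cars x t : ℝ) / t) Filter.atTop ≤ ε

/-- The state of the automaton with transition function `Δ` and start state `s`
after reading `t` bits of `b`: `q_0(b) = s`, `q_{t+1}(b) = Δ(q_t(b), b_{t+1})`. -/
def autoRun {Q : Type*} (Δ : Q → Bool → Q) (s : Q) (b : ℕ → Bool) : ℕ → Q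
  | 0 => s
  | t + 1 => Δ (autoRun Δ s b t) (b t)

namespace AutoSparse

def runLen (b : ℕ → Bool) : ℕ → ℕ
  | 0 => 0
  | t + 1 => if b t then runLen b t + 1 else 0

def good (m : ℕ) (b : ℕ → Bool) (t : ℕ) : Prop :=
  m ≤ t ∧ ∀ j ∈ Finset.Ico (t - m) t, b j = true

instance (m : ℕ) (b : ℕ → Bool) (t : ℕ) : Decidable (good m b t) :=
  inferInstanceAs (Decidable (_ ∧ _))

def NC (m : ℕ) (b : ℕ → Bool) (t : ℕ) : ℕ :=
  ((Finset.range t).filter (fun s => good m b s)).card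

def extBits (n : ℕ) (w : Fin n → Bool) : ℕ → Bool :=
  fun i => if h : i < n then w ⟨i, h⟩ else false

lemma autoRun_eq (m : ℕ) (b : ℕ → Bool) (t : ℕ) :
    autoRun (fun i z => if z then min (i + 1) m else 0) 0 b t = min (runLen b t) m := by
  induction t with
  | zero => simp [autoRun, runLen]
  | succ t ih =>
      simp only [autoRun, runLen, ih]
      cases b t <;> simp <;> omega

lemma runLen_ge_iff (b : ℕ → Bool) (t k : ℕ) :
    k ≤ runLen b t ↔ k ≤ t ∧ ∀ j ∈ Finset.Ico (t - k) t, b j = true := by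
  induction t generalizing k with
  | zero =>
      cases k with
      | zero => simp [runLen]
      | succ k => simp [runLen]
  | succ t ih =>
      cases k with
      | zero => simp
      | succ k =>
          simp only [runLen]
          cases hb : b t with
          | false =>
              rw [if_neg (by simp)]
              constructor
              · omega
              · rintro ⟨hk, hall⟩
                have := hall t (by simp only [Finset.mem_Ico]; omega)
                simp [hb] at this
          | true =>
              rw [if_pos rfl]
              rw [Nat.succ_le_succ_iff, ih]
              constructor
              · rintro ⟨hk, hall⟩
                refine ⟨by omega, fun j hj => ?_⟩
                simp only [Finset.mem_Ico] at hj
                rcases Nat.lt_or_ge j t with h | h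
                · exact hall j (by simp; omega)
                · have : j = t := by omega
                  simp [this, hb]
              · rintro ⟨hk, hall⟩
                refine ⟨by omega, fun j hj => ?_⟩
                simp only [Finset.mem_Ico] at hj
                exact hall j (by simp; omega)

lemma good_iff (m : ℕ) (b : ℕ → Bool) (t : ℕ) :
    autoRun (fun i z => if z then min (i + 1) m else 0) 0 b t = m ↔ good m b t := by
  rw [autoRun_eq, good, ← runLen_ge_iff]
  omega


lemma card_cyl (n : ℕ) (A : Finset (Fin n)) :
    (Finset.univ.filter (fun w : Fin n → Bool => ∀ i ∈ A, w i = true)).card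
      = 2 ^ (n - A.card) := by
  have e : {w : Fin n → Bool // ∀ i ∈ A, w i = true} ≃ ((Aᶜ : Finset (Fin n)) → Bool) :=
    { toFun := fun w i => w.1 i.1
      invFun := fun g =>
        ⟨fun i => if h : i ∈ A then true else g ⟨i, by simpa using h⟩,
         fun i hi => by simp [hi]⟩
      left_inv := by
        rintro ⟨w, hw⟩
        ext i
        by_cases h : i ∈ A
        · simp [h, hw i h]
        · simp [h]
      right_inv := by
        intro g
        ext i
        have : i.1 ∉ A := Finset.mem_compl.mp i.2
        simp [this] }
  have h1 : (Finset.univ.filter (fun w : Fin n → Bool => ∀ i ∈ A, w i = true)).card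
      = Fintype.card {w : Fin n → Bool // ∀ i ∈ A, w i = true} := by
    rw [Fintype.card_subtype]
  rw [h1, Fintype.card_congr e]
  simp [Finset.card_compl]

lemma meas_restrict (μ : Measure (ℕ → Bool))
    (hμ : ∀ (n : ℕ) (v : ℕ → Bool),
      μ {b : ℕ → Bool | ∀ i, i < n → b i = v i} = (1 / 2 : ENNReal) ^ n)
    (n : ℕ) (S : Finset (Fin n → Bool)) :
    μ {b : ℕ → Bool | (fun i : Fin n => b i.1) ∈ S} = S.card * (1 / 2 : ENNReal) ^ n := by
  have hset : {b : ℕ → Bool | (fun i : Fin n => b i.1) ∈ S}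
      = ⋃ v ∈ S, {b : ℕ → Bool | ∀ i, i < n → b i = extBits n v i} := by
    ext b
    simp only [Set.mem_setOf_eq, Set.mem_iUnion]
    constructor
    · intro h
      exact ⟨_, h, fun i hi => by simp [extBits, hi]⟩
    · rintro ⟨v, hv, h⟩
      have hv2 : (fun i : Fin n => b i.1) = v := by
        funext i
        have h2 := h i.1 i.2
        simpa [extBits, i.2] using h2
      rwa [hv2]
  rw [hset, measure_biUnion_finset]
  · simp only [hμ, Finset.sum_const, nsmul_eq_mul]
  · intro v hv v' hv' hne
    rw [Function.onFun]
    refine Set.disjoint_left.mpr fun b hb hb' => hne ?_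
    funext i
    have h1 := hb i.1 i.2
    have h2 := hb' i.1 i.2
    rw [h1] at h2
    simpa [extBits, i.2] using h2
  · intro v hv
    have : {b : ℕ → Bool | ∀ i, i < n → b i = extBits n v i}
        = ⋂ i, ⋂ (_ : i < n), (fun b : ℕ → Bool => b i) ⁻¹' {extBits n v i} := by
      ext b; simp
    rw [this]
    exact MeasurableSet.iInter fun i => MeasurableSet.iInter fun hi =>
      (measurable_pi_apply i) (measurableSet_singleton _)

lemma card_allOn (n : ℕ) (I : Finset ℕ) (hI : ∀ j ∈ I, j < n) :
    (Finset.univ.filter (fun w : Fin n → Bool => ∀ j ∈ I, extBits n w j = true)).card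
      = 2 ^ (n - I.card) := by
  have h : ∀ w : Fin n → Bool,
      (∀ j ∈ I, extBits n w j = true) ↔ (∀ i ∈ I.attachFin hI, w i = true) := by
    intro w
    constructor
    · intro h i hi
      have := h i.1 ((Finset.mem_attachFin _).mp hi)
      simpa [extBits, i.2] using this
    · intro h j hj
      have := h ⟨j, hI j hj⟩ ((Finset.mem_attachFin _).mpr hj)
      simpa [extBits, hI j hj] using this
  rw [Finset.filter_congr (fun w _ => h w)]
  rw [card_cyl, Finset.card_attachFin]

-- single-time count
lemma card_good_eq (m n t : ℕ) (hmt : m ≤ t) (htn : t ≤ n) :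
    (Finset.univ.filter (fun w : Fin n → Bool => good m (extBits n w) t)).card
      = 2 ^ (n - m) := by
  have h : ∀ w : Fin n → Bool,
      good m (extBits n w) t ↔ ∀ j ∈ Finset.Ico (t - m) t, extBits n w j = true := by
    intro w; unfold good; tauto
  rw [Finset.filter_congr (fun w _ => h w)]
  rw [card_allOn n _ (fun j hj => by simp only [Finset.mem_Ico] at hj; omega)]
  congr 1
  rw [Nat.card_Ico]
  omega

lemma card_good_zero (m n t : ℕ) (hmt : t < m) :
    (Finset.univ.filter (fun w : Fin n → Bool => good m (extBits n w) t)).card = 0 := by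
  rw [Finset.card_eq_zero, Finset.filter_eq_empty_iff]
  intro w _ hg
  exact absurd hg.1 (by omega)

lemma sum_NC (m n : ℕ) (hmn : m ≤ n) :
    ∑ w : Fin n → Bool, NC m (extBits n w) n = (n - m) * 2 ^ (n - m) := by
  have h1 : ∀ w : Fin n → Bool, NC m (extBits n w) n
      = ∑ t ∈ Finset.range n, if good m (extBits n w) t then 1 else 0 := by
    intro w; rw [NC, Finset.card_filter]
  simp_rw [h1]
  rw [Finset.sum_comm]
  have h2 : ∀ t ∈ Finset.range n,
      (∑ w : Fin n → Bool, if good m (extBits n w) t then 1 else 0)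
        = if m ≤ t then 2 ^ (n - m) else 0 := by
    intro t ht
    rw [← Finset.card_filter]
    by_cases hmt : m ≤ t
    · rw [if_pos hmt, card_good_eq m n t hmt (le_of_lt (Finset.mem_range.mp ht))]
    · rw [if_neg hmt, card_good_zero m n t (by omega)]
  rw [Finset.sum_congr rfl h2, ← Finset.sum_filter]
  have h3 : (Finset.range n).filter (fun t => m ≤ t) = Finset.Ico m n := by
    ext x; simp [Finset.mem_range, Finset.mem_Ico]; omega
  rw [h3]
  simp [Nat.card_Ico, mul_comm]

lemma d_le_single (m n s t : ℕ) (hs : s ≤ n) :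
    (Finset.univ.filter (fun w : Fin n → Bool =>
      good m (extBits n w) s ∧ good m (extBits n w) t)).card ≤ 2 ^ (n - m) := by
  have hsub : (Finset.univ.filter (fun w : Fin n → Bool =>
      good m (extBits n w) s ∧ good m (extBits n w) t))
      ⊆ Finset.univ.filter (fun w : Fin n → Bool => good m (extBits n w) s) := by
    intro w hw
    simp only [Finset.mem_filter] at hw ⊢
    exact ⟨hw.1, hw.2.1⟩
  refine le_trans (Finset.card_le_card hsub) ?_
  by_cases hms : m ≤ s
  · rw [card_good_eq m n s hms hs]
  · rw [card_good_zero m n s (by omega)]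
    exact Nat.zero_le _

lemma d_far (m n s t : ℕ) (hst : s + m ≤ t) (ht : t ≤ n) :
    (Finset.univ.filter (fun w : Fin n → Bool =>
      good m (extBits n w) s ∧ good m (extBits n w) t)).card ≤ 2 ^ (n - 2 * m) := by
  by_cases hms : m ≤ s
  · have hsub : (Finset.univ.filter (fun w : Fin n → Bool =>
        good m (extBits n w) s ∧ good m (extBits n w) t))
        ⊆ Finset.univ.filter (fun w : Fin n → Bool =>
            ∀ j ∈ Finset.Ico (s - m) s ∪ Finset.Ico (t - m) t, extBits n w j = true) := by
      intro w hw
      simp only [Finset.mem_filter] at hw ⊢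
      refine ⟨Finset.mem_univ _, fun j hj => ?_⟩
      rcases Finset.mem_union.mp hj with h | h
      · exact hw.2.1.2 j h
      · exact hw.2.2.2 j h
    refine le_trans (Finset.card_le_card hsub) ?_
    rw [card_allOn n _ (fun j hj => by
      rcases Finset.mem_union.mp hj with h | h <;> simp only [Finset.mem_Ico] at h <;> omega)]
    have hdisj : Disjoint (Finset.Ico (s - m) s) (Finset.Ico (t - m) t) := by
      rw [Finset.disjoint_left]
      intro j hj hj'
      simp only [Finset.mem_Ico] at hj hj'
      omega
    rw [Finset.card_union_of_disjoint hdisj, Nat.card_Ico, Nat.card_Ico]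
    have : s - (s - m) + (t - (t - m)) = 2 * m := by omega
    rw [this]
  · have : (Finset.univ.filter (fun w : Fin n → Bool =>
        good m (extBits n w) s ∧ good m (extBits n w) t)).card = 0 := by
      rw [Finset.card_eq_zero, Finset.filter_eq_empty_iff]
      intro w _ hg
      exact absurd hg.1.1 (by omega)
    rw [this]
    exact Nat.zero_le _

lemma d_swap (m n s t : ℕ) :
    (Finset.univ.filter (fun w : Fin n → Bool =>
      good m (extBits n w) s ∧ good m (extBits n w) t)).card
    = (Finset.univ.filter (fun w : Fin n → Bool =>
      good m (extBits n w) t ∧ good m (extBits n w) s)).card := by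
  congr 1
  exact Finset.filter_congr (fun w _ => and_comm)

lemma sum_NC_sq (m n : ℕ) :
    ∑ w : Fin n → Bool, (NC m (extBits n w) n) ^ 2
      ≤ n ^ 2 * 2 ^ (n - 2 * m) + 2 * m * n * 2 ^ (n - m) := by
  have h1 : ∀ w : Fin n → Bool, (NC m (extBits n w) n) ^ 2
      = ∑ s ∈ Finset.range n, ∑ t ∈ Finset.range n,
          if good m (extBits n w) s ∧ good m (extBits n w) t then 1 else 0 := by
    intro w
    rw [sq, NC, Finset.card_filter, Finset.sum_mul_sum]
    refine Finset.sum_congr rfl fun s _ => Finset.sum_congr rfl fun t _ => ?_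
    by_cases hP : good m (extBits n w) s <;> by_cases hQ : good m (extBits n w) t <;>
      simp [hP, hQ]
  simp_rw [h1]
  rw [Finset.sum_comm]
  have h2 : ∀ s ∈ Finset.range n,
      (∑ w : Fin n → Bool, ∑ t ∈ Finset.range n,
        if good m (extBits n w) s ∧ good m (extBits n w) t then 1 else 0)
      ≤ n * 2 ^ (n - 2 * m) + 2 * m * 2 ^ (n - m) := by
    intro s hs
    rw [Finset.sum_comm]
    have hsn : s ≤ n := le_of_lt (Finset.mem_range.mp hs)
    have h3 : ∀ t ∈ Finset.range n,
        (∑ w : Fin n → Bool,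
          if good m (extBits n w) s ∧ good m (extBits n w) t then 1 else 0)
        ≤ 2 ^ (n - 2 * m) + if (t < s + m ∧ s < t + m) then 2 ^ (n - m) else 0 := by
      intro t ht
      rw [← Finset.card_filter]
      by_cases hnear : t < s + m ∧ s < t + m
      · rw [if_pos hnear]
        exact le_trans (d_le_single m n s t hsn) (Nat.le_add_left _ _)
      · rw [if_neg hnear, add_zero]
        rcases (by omega : s + m ≤ t ∨ t + m ≤ s) with h | h
        · exact d_far m n s t h (le_of_lt (Finset.mem_range.mp ht))
        · rw [d_swap]
          exact d_far m n t s h hsn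
    refine le_trans (Finset.sum_le_sum h3) ?_
    rw [Finset.sum_add_distrib, Finset.sum_const, Finset.card_range, smul_eq_mul]
    refine Nat.add_le_add_left ?_ _
    rw [← Finset.sum_filter, Finset.sum_const, smul_eq_mul]
    have hsub : (Finset.range n).filter (fun t => t < s + m ∧ s < t + m)
        ⊆ Finset.Ico (s + 1 - m) (s + m) := by
      intro t ht
      simp only [Finset.mem_filter, Finset.mem_range, Finset.mem_Ico] at ht ⊢
      omega
    have hcard : ((Finset.range n).filter (fun t => t < s + m ∧ s < t + m)).card ≤ 2 * m := by
      refine le_trans (Finset.card_le_card hsub) ?_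
      rw [Nat.card_Ico]
      omega
    exact Nat.mul_le_mul_right _ hcard
  refine le_trans (Finset.sum_le_sum h2) ?_
  rw [Finset.sum_const, Finset.card_range, smul_eq_mul]
  ring_nf
  omega

lemma cheb (m n : ℕ) (δ : ℝ) (hδ : 0 ≤ δ) (hmn : 2 * m ≤ n) :
    ((Finset.univ.filter (fun w : Fin n → Bool =>
        ((1/2 : ℝ) ^ m + δ) * n ≤ (NC m (extBits n w) n : ℝ))).card : ℝ) * (δ * n) ^ 2
      ≤ 2 ^ n * (4 * m * n * (1/2 : ℝ) ^ m) := by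
  set p : ℝ := (1/2 : ℝ) ^ m with hp
  have hmn' : m ≤ n := by omega
  have hp0 : 0 ≤ p := by positivity
  have hp1 : p ≤ 1 := by
    rw [hp]
    exact pow_le_one₀ (by norm_num) (by norm_num)
  have hpow1 : ((2 : ℝ)) ^ (n - m) = 2 ^ n * p := by
    have h2m : (2 : ℝ) ^ (n - m) * 2 ^ m = 2 ^ n := by
      rw [← pow_add]; congr 1; omega
    have : p = ((2 : ℝ) ^ m)⁻¹ := by rw [hp, one_div, inv_pow]
    rw [this]
    field_simp
    linarith [h2m]
  have hpow2 : ((2 : ℝ)) ^ (n - 2 * m) = 2 ^ n * p ^ 2 := by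
    have h2m : (2 : ℝ) ^ (n - 2 * m) * (2 ^ m * 2 ^ m) = 2 ^ n := by
      rw [← pow_add, ← pow_add]; congr 1; omega
    have hinv : p = ((2 : ℝ) ^ m)⁻¹ := by rw [hp, one_div, inv_pow]
    rw [hinv]
    field_simp
    linarith [h2m]
  set N : (Fin n → Bool) → ℝ := fun w => (NC m (extBits n w) n : ℝ) with hN
  have hS1 : ∑ w : Fin n → Bool, N w = ((n : ℝ) - m) * (2 ^ n * p) := by
    have := sum_NC m n hmn'
    have hcast : ∑ w : Fin n → Bool, N w = (((n - m) * 2 ^ (n - m) : ℕ) : ℝ) := by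
      rw [← this]; push_cast; rfl
    rw [hcast]
    push_cast [Nat.cast_sub hmn']
    rw [hpow1]
  have hS2 : ∑ w : Fin n → Bool, (N w) ^ 2
      ≤ (n : ℝ) ^ 2 * (2 ^ n * p ^ 2) + 2 * m * n * (2 ^ n * p) := by
    have := sum_NC_sq m n
    have hc1 : ∑ w : Fin n → Bool, (N w) ^ 2
        = ((∑ w : Fin n → Bool, (NC m (extBits n w) n) ^ 2 : ℕ) : ℝ) := by
      rw [hN]; push_cast; rfl
    have hcast : ∑ w : Fin n → Bool, (N w) ^ 2
        ≤ ((n ^ 2 * 2 ^ (n - 2 * m) + 2 * m * n * 2 ^ (n - m) : ℕ) : ℝ) := by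
      rw [hc1]; exact_mod_cast this
    refine le_trans hcast ?_
    push_cast
    rw [hpow1, hpow2]
  have hcardW : (Finset.univ : Finset (Fin n → Bool)).card = 2 ^ n := by
    simp [Finset.card_univ]
  have hT : ∑ w : Fin n → Bool, (N w - p * n) ^ 2 ≤ 2 ^ n * (4 * m * n * p) := by
    have hexp : ∑ w : Fin n → Bool, (N w - p * n) ^ 2
        = (∑ w : Fin n → Bool, (N w) ^ 2) - 2 * (p * n) * (∑ w : Fin n → Bool, N w)
          + (2 ^ n : ℝ) * (p * n) ^ 2 := by
      have h : ∀ w : Fin n → Bool, (N w - p * n) ^ 2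
          = (N w) ^ 2 - 2 * (p * n) * N w + (p * n) ^ 2 := fun w => by ring
      rw [Finset.sum_congr rfl (fun w _ => h w), Finset.sum_add_distrib,
        Finset.sum_sub_distrib, ← Finset.mul_sum, Finset.sum_const, hcardW,
        nsmul_eq_mul]
      push_cast
      ring
    rw [hexp, hS1]
    have h2n : (0 : ℝ) ≤ 2 ^ n := by positivity
    nlinarith [hS2, mul_nonneg (mul_nonneg (mul_nonneg h2n (by positivity : (0:ℝ) ≤ (m:ℝ))) (by positivity : (0:ℝ) ≤ (n:ℝ))) hp0]
  set S := Finset.univ.filter (fun w : Fin n → Bool => (p + δ) * n ≤ N w) with hSdef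
  have hstep : (S.card : ℝ) * (δ * n) ^ 2 ≤ ∑ w ∈ S, (N w - p * n) ^ 2 := by
    rw [← nsmul_eq_mul, ← Finset.sum_const]
    refine Finset.sum_le_sum fun w hw => ?_
    have hw' : (p + δ) * n ≤ N w := (Finset.mem_filter.mp hw).2
    have h1 : 0 ≤ δ * n := by positivity
    have h2 : δ * n ≤ N w - p * n := by nlinarith
    exact pow_le_pow_left₀ h1 h2 2
  have hfinal : ∑ w ∈ S, (N w - p * n) ^ 2 ≤ ∑ w : Fin n → Bool, (N w - p * n) ^ 2 :=
    Finset.sum_le_sum_of_subset_of_nonneg (Finset.filter_subset _ _)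
      (fun w _ _ => by positivity)
  calc ((Finset.univ.filter (fun w : Fin n → Bool =>
        (p + δ) * n ≤ N w)).card : ℝ) * (δ * n) ^ 2
      ≤ ∑ w ∈ S, (N w - p * n) ^ 2 := hstep
    _ ≤ ∑ w : Fin n → Bool, (N w - p * n) ^ 2 := hfinal
    _ ≤ 2 ^ n * (4 * m * n * p) := hT

lemma NC_congr (m n : ℕ) (b c : ℕ → Bool) (h : ∀ i, i < n → b i = c i) :
    NC m b n = NC m c n := by
  unfold NC
  congr 1
  refine Finset.filter_congr fun t ht => ?_
  have htn : t < n := Finset.mem_range.mp ht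
  unfold good
  constructor
  · rintro ⟨h1, h2⟩
    refine ⟨h1, fun j hj => ?_⟩
    have hjn : j < n := by simp only [Finset.mem_Ico] at hj; omega
    rw [← h j hjn]
    exact h2 j hj
  · rintro ⟨h1, h2⟩
    refine ⟨h1, fun j hj => ?_⟩
    have hjn : j < n := by simp only [Finset.mem_Ico] at hj; omega
    rw [h j hjn]
    exact h2 j hj

lemma cars_eq (m : ℕ) (b : ℕ → Bool) (t : ℕ) :
    cars (fun s => decide
      (autoRun (fun i z => if z then min (i + 1) m else 0) 0 b s = m)) t = NC m b t := by
  unfold cars NC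
  congr 1
  refine Finset.filter_congr fun s _ => ?_
  simp [good_iff]

lemma meas_F (μ : Measure (ℕ → Bool))
    (hμ : ∀ (n : ℕ) (v : ℕ → Bool),
      μ {b : ℕ → Bool | ∀ i, i < n → b i = v i} = (1 / 2 : ENNReal) ^ n)
    (m n : ℕ) (δ : ℝ) :
    μ {b : ℕ → Bool | ((1/2 : ℝ) ^ m + δ) * n ≤ (NC m b n : ℝ)}
      = ((Finset.univ.filter (fun w : Fin n → Bool =>
          ((1/2 : ℝ) ^ m + δ) * n ≤ (NC m (extBits n w) n : ℝ))).card : ENNReal)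
        * (1 / 2 : ENNReal) ^ n := by
  set S := Finset.univ.filter (fun w : Fin n → Bool =>
      ((1/2 : ℝ) ^ m + δ) * n ≤ (NC m (extBits n w) n : ℝ)) with hS
  have hset : {b : ℕ → Bool | ((1/2 : ℝ) ^ m + δ) * n ≤ (NC m b n : ℝ)}
      = {b : ℕ → Bool | (fun i : Fin n => b i.1) ∈ S} := by
    ext b
    have hNC : NC m b n = NC m (extBits n (fun i : Fin n => b i.1)) n := by
      refine NC_congr m n _ _ fun i hi => ?_
      simp [extBits, hi]
    simp only [Set.mem_setOf_eq, hS, Finset.mem_filter, Finset.mem_univ, true_and]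
    rw [← hNC]
  rw [hset, meas_restrict μ hμ n S]

lemma meas_F_le (μ : Measure (ℕ → Bool))
    (hμ : ∀ (n : ℕ) (v : ℕ → Bool),
      μ {b : ℕ → Bool | ∀ i, i < n → b i = v i} = (1 / 2 : ENNReal) ^ n)
    (m n : ℕ) (δ : ℝ) (hδ : 0 < δ) (hmn : 2 * m ≤ n) (hn : 1 ≤ n) :
    μ {b : ℕ → Bool | ((1/2 : ℝ) ^ m + δ) * n ≤ (NC m b n : ℝ)}
      ≤ ENNReal.ofReal ((4 * m * (1/2 : ℝ) ^ m / δ ^ 2) / n) := by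
  rw [meas_F μ hμ m n δ]
  set S := Finset.univ.filter (fun w : Fin n → Bool =>
      ((1/2 : ℝ) ^ m + δ) * n ≤ (NC m (extBits n w) n : ℝ)) with hS
  set p : ℝ := (1/2 : ℝ) ^ m with hp
  have hp0 : 0 ≤ p := by positivity
  have hn0 : (0 : ℝ) < n := by exact_mod_cast hn
  have hA : (0 : ℝ) < 2 ^ n := by positivity
  have hcheb := cheb m n δ hδ.le hmn
  -- real bound on card * (1/2)^n
  have hreal : (S.card : ℝ) * (1/2 : ℝ) ^ n ≤ (4 * m * p / δ ^ 2) / n := by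
    have hd2 : (0 : ℝ) < (δ * n) ^ 2 := by positivity
    have hc : (S.card : ℝ) ≤ 2 ^ n * (4 * m * n * p) / (δ * n) ^ 2 :=
      (le_div_iff₀ hd2).mpr hcheb
    have hhalf : (1/2 : ℝ) ^ n = ((2 : ℝ) ^ n)⁻¹ := by
      rw [one_div, inv_pow]
    have := mul_le_mul_of_nonneg_right hc (by positivity : (0:ℝ) ≤ ((2:ℝ) ^ n)⁻¹)
    rw [hhalf]
    refine le_trans this (le_of_eq ?_)
    field_simp
  have hENN : (S.card : ENNReal) * (1 / 2 : ENNReal) ^ n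
      = ENNReal.ofReal ((S.card : ℝ) * (1/2 : ℝ) ^ n) := by
    rw [ENNReal.ofReal_mul (by positivity)]
    congr 1
    · exact (ENNReal.ofReal_natCast _).symm
    · have h12 : (1/2 : ENNReal) = ENNReal.ofReal (1/2 : ℝ) := by
        rw [ENNReal.ofReal_div_of_pos (by norm_num)]
        norm_num
      rw [h12, ← ENNReal.ofReal_pow (by norm_num)]
  rw [hENN]
  exact ENNReal.ofReal_le_ofReal hreal

lemma bad_null (μ : Measure (ℕ → Bool))
    (hμ : ∀ (n : ℕ) (v : ℕ → Bool),
      μ {b : ℕ → Bool | ∀ i, i < n → b i = v i} = (1 / 2 : ENNReal) ^ n)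
    (m : ℕ) (δ : ℝ) (hδ : 0 < δ) (T : ℕ) :
    μ (⋂ (n : ℕ) (_ : T ≤ n),
        {b : ℕ → Bool | ((1/2 : ℝ) ^ m + δ) * n ≤ (NC m b n : ℝ)}) = 0 := by
  set K : ℝ := 4 * m * (1/2 : ℝ) ^ m / δ ^ 2 with hK
  have hmono : ∀ n : ℕ, T ≤ n → 2 * m ≤ n → 1 ≤ n →
      μ (⋂ (n : ℕ) (_ : T ≤ n),
        {b : ℕ → Bool | ((1/2 : ℝ) ^ m + δ) * n ≤ (NC m b n : ℝ)})
        ≤ ENNReal.ofReal (K / n) := by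
    intro n hT hm h1
    refine le_trans (measure_mono ?_) (meas_F_le μ hμ m n δ hδ hm h1)
    intro b hb
    simp only [Set.mem_iInter] at hb
    exact hb n hT
  have htend : Filter.Tendsto (fun n : ℕ => ENNReal.ofReal (K / n))
      Filter.atTop (nhds 0) := by
    have h1 : Filter.Tendsto (fun n : ℕ => K / (n : ℝ)) Filter.atTop (nhds 0) :=
      tendsto_const_div_atTop_nhds_zero_nat K
    have := (ENNReal.continuous_ofReal.tendsto 0).comp h1
    simpa [Function.comp_def] using this
  have hle : μ (⋂ (n : ℕ) (_ : T ≤ n),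
        {b : ℕ → Bool | ((1/2 : ℝ) ^ m + δ) * n ≤ (NC m b n : ℝ)}) ≤ 0 := by
    refine ge_of_tendsto htend ?_
    filter_upwards [Filter.eventually_ge_atTop (max T (max (2 * m) 1))] with n hn
    exact hmono n (le_trans (le_max_left _ _) hn)
      (le_trans (le_trans (le_max_left _ _) (le_max_right _ _)) hn)
      (le_trans (le_trans (le_max_right _ _) (le_max_right _ _)) hn)
  exact le_antisymm hle (zero_le')

end AutoSparse


open AutoSparse in
/-- Consider the `ℓ`-state automaton with states `{1, …, ℓ}` (encoded here as
`{0, …, ℓ-1}`, state `i` of the paper being `i - 1`), start state `1`, transitions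
`Δ(i, 1) = min(i+1, ℓ)` and `Δ(i, 0) = 1`, and `B = {ℓ}`.  If `μ` is the uniform product
(coin-flipping) measure on `{0,1}^ω` — characterized by giving each cylinder on the
first `n` coordinates measure `2^{-n}` — then for `μ`-almost every `b`, the
characteristic sequence of `V_B(b)` is `2^{-ℓ+1}`-weakly sparse. -/
theorem counting_automaton_almost_surely_sparse (ℓ : ℕ) (hℓ : 1 ≤ ℓ)
    (μ : Measure (ℕ → Bool)) [IsProbabilityMeasure μ]
    (hμ : ∀ (n : ℕ) (v : ℕ → Bool),
      μ {b : ℕ → Bool | ∀ i, i < n → b i = v i} = (1 / 2 : ENNReal) ^ n) :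
    ∀ᵐ b ∂μ, epsWeaklySparse ((1 / 2 : ℝ) ^ (ℓ - 1))
      (fun t => decide
        (autoRun (fun i z => if z then min (i + 1) (ℓ - 1) else 0) 0 b t = ℓ - 1)) := by
  classical
  set m : ℕ := ℓ - 1 with hm
  set p : ℝ := (1 / 2 : ℝ) ^ m with hp
  set Bad : Set (ℕ → Bool) := ⋃ (k : ℕ) (T : ℕ), ⋂ (n : ℕ) (_ : T ≤ n),
      {b : ℕ → Bool | (p + 1 / ((k : ℝ) + 1)) * n ≤ (NC m b n : ℝ)} with hBad
  have hBadNull : μ Bad = 0 := by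
    refine measure_iUnion_null fun k => measure_iUnion_null fun T => ?_
    have hδ : (0 : ℝ) < 1 / ((k : ℝ) + 1) := by positivity
    exact bad_null μ hμ m (1 / ((k : ℝ) + 1)) hδ T
  rw [ae_iff]
  refine measure_mono_null ?_ hBadNull
  intro b hb
  simp only [Set.mem_setOf_eq] at hb
  -- rewrite sparsity through NC
  have hcars : (fun t : ℕ => (cars (fun t => decide
      (autoRun (fun i z => if z then min (i + 1) m else 0) 0 b t = m)) t : ℝ) / t)
      = fun t : ℕ => (NC m b t : ℝ) / t := by
    funext t
    rw [cars_eq]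
  have hlim : p < Filter.liminf (fun t : ℕ => (NC m b t : ℝ) / t) Filter.atTop := by
    simp only [epsWeaklySparse] at hb
    rw [hcars] at hb
    exact not_le.mp hb
  obtain ⟨k, hk⟩ := exists_nat_one_div_lt
    (sub_pos.mpr hlim : (0:ℝ) < Filter.liminf (fun t : ℕ => (NC m b t : ℝ) / t)
      Filter.atTop - p)
  set δ : ℝ := 1 / ((k : ℝ) + 1) with hδdef
  have hδ : 0 < δ := by positivity
  have hlt : p + δ < Filter.liminf (fun t : ℕ => (NC m b t : ℝ) / t) Filter.atTop := by
    rw [hδdef]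
    linarith [hk]
  have hbound : Filter.IsBoundedUnder (· ≥ ·) Filter.atTop
      (fun t : ℕ => (NC m b t : ℝ) / t) := by
    refine Filter.isBoundedUnder_of ⟨0, fun t => ?_⟩
    positivity
  have hev : ∀ᶠ t in Filter.atTop, p + δ < (NC m b t : ℝ) / t :=
    Filter.eventually_lt_of_lt_liminf hlt hbound
  obtain ⟨T, hT⟩ := Filter.eventually_atTop.mp hev
  rw [hBad]
  simp only [Set.mem_iUnion, Set.mem_iInter, Set.mem_setOf_eq]
  refine ⟨k, T + 1, fun n hn => ?_⟩
  have hn0 : (0 : ℝ) < n := by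
    have : 1 ≤ n := by omega
    exact_mod_cast this
  have := hT n (by omega)
  rw [lt_div_iff₀ hn0] at this
  exact this.le
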